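/- Let H : [0,∞) → (1/2,1) be measurable and let s, t > 0. Then R_H(t,s) = c_{t,s} ∫_0^t ∫_0^s [ β¹_{s,t} 1_{{y>z}} + β¹_{t,s} 1_{{y<z}} ] (y/z)^{H_t−H_s} |y−z|^{H_s+H_t−2} dz dy. -/

import Mathlib

open MeasureTheory Set Filter

/-- The Beta function `β(x,y) = Γ(x)Γ(y)/Γ(x+y)`. -/
noncomputable def Beta (x y : ℝ) : ℝ := Real.Gamma x * Real.Gamma y / Real.Gamma (x + y)

/-- The normalizing constant `c_H = (H(2H−1)/β(2−2H, H−1/2))^{1/2}`. -/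
noncomputable def cH (H : ℝ) : ℝ := Real.sqrt (H * (2 * H - 1) / Beta (2 - 2 * H) (H - 1 / 2))

/-- The kernel `K_H(t,s)`; equal to
`c_{H_t} s^{1/2−H_t} ∫_s^t (u−s)^{H_t−3/2} u^{H_t−1/2} du` for `s ≤ t` and `0` for `s > t`. -/
noncomputable def KH (H : ℝ → ℝ) (t s : ℝ) : ℝ :=
  if s ≤ t then
    cH (H t) * s ^ ((1 : ℝ) / 2 - H t) *
      ∫ u in s..t, (u - s) ^ (H t - 3 / 2) * u ^ (H t - 1 / 2)
  else 0

/-- The covariance function `R_H(t,s) = ∫_0^{min(s,t)} K_H(t,u) K_H(s,u) du`. -/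
noncomputable def RH (H : ℝ → ℝ) (t s : ℝ) : ℝ :=
  ∫ u in (0 : ℝ)..(min s t), KH H t u * KH H s u

lemma Beta_pos {p q : ℝ} (hp : 0 < p) (hq : 0 < q) : 0 < Beta p q :=
  div_pos (mul_pos (Real.Gamma_pos_of_pos hp) (Real.Gamma_pos_of_pos hq))
    (Real.Gamma_pos_of_pos (by linarith))

lemma integral_beta {p q : ℝ} (hp : 0 < p) (hq : 0 < q) :
    ∫ v in Ioo (0:ℝ) 1, v ^ (p - 1) * (1 - v) ^ (q - 1) = Beta p q := by
  have key : Complex.betaIntegral p q =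
      ((∫ v in (0:ℝ)..1, v ^ (p - 1) * (1 - v) ^ (q - 1) : ℝ) : ℂ) := by
    rw [Complex.betaIntegral, ← intervalIntegral.integral_ofReal]
    refine intervalIntegral.integral_congr fun x hx => ?_
    rw [uIcc_of_le (by norm_num)] at hx
    rw [show ((p:ℂ) - 1) = ((p - 1 : ℝ) : ℂ) by push_cast; ring,
      show ((q:ℂ) - 1) = ((q - 1 : ℝ) : ℂ) by push_cast; ring,
      show (1 - (x:ℂ)) = ((1 - x : ℝ) : ℂ) by push_cast; ring,
      ← Complex.ofReal_cpow hx.1, ← Complex.ofReal_cpow (by linarith [hx.2]),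
      Complex.ofReal_mul]
  have h2 := Complex.Gamma_mul_Gamma_eq_betaIntegral
    (s := p) (t := q) (by simpa using hp) (by simpa using hq)
  rw [key, ← Complex.ofReal_add, Complex.Gamma_ofReal, Complex.Gamma_ofReal,
    Complex.Gamma_ofReal, ← Complex.ofReal_mul, ← Complex.ofReal_mul] at h2
  have h3 : Real.Gamma p * Real.Gamma q =
      Real.Gamma (p + q) * ∫ v in (0:ℝ)..1, v ^ (p - 1) * (1 - v) ^ (q - 1) :=
    mod_cast h2
  have hne : Real.Gamma (p + q) ≠ 0 := (Real.Gamma_pos_of_pos (by linarith)).ne'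
  have : (∫ v in (0:ℝ)..1, v ^ (p - 1) * (1 - v) ^ (q - 1)) = Beta p q := by
    rw [Beta]; field_simp [hne] at h3 ⊢; linarith [h3]
  rw [← this, intervalIntegral.integral_of_le (by norm_num),
    MeasureTheory.integral_Ioc_eq_integral_Ioo]

lemma betaIntegrableOn {p q : ℝ} (hp : 0 < p) (hq : 0 < q) :
    IntegrableOn (fun v => v ^ (p - 1) * (1 - v) ^ (q - 1)) (Ioo (0:ℝ) 1) := by
  have h1 : IntervalIntegrable (fun v : ℝ => v ^ (p - 1) * (1 - v) ^ (q - 1))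
      volume 0 (1/2) := by
    apply (intervalIntegral.intervalIntegrable_rpow' (by linarith)).mul_continuousOn
    apply ContinuousOn.rpow_const (continuous_const.sub continuous_id).continuousOn
    intro x hx
    rw [uIcc_of_le (by norm_num)] at hx
    left; intro h; rw [Pi.sub_apply, sub_eq_zero] at h; simp only [id_eq] at h
    rw [← h] at hx; norm_num at hx
  have h2 : IntervalIntegrable (fun v : ℝ => v ^ (p - 1) * (1 - v) ^ (q - 1))
      volume (1/2) 1 := by
    have hb : IntervalIntegrable (fun v : ℝ => (1 - v) ^ (q - 1)) volume (1/2) 1 := by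
      have := (intervalIntegral.intervalIntegrable_rpow' (r := q - 1) (by linarith)
        (a := 0) (b := 1/2)).comp_sub_left 1
      norm_num at this
      exact this.symm
    apply hb.continuousOn_mul
    apply ContinuousOn.rpow_const continuousOn_id
    intro x hx
    rw [uIcc_of_le (by norm_num)] at hx
    left; intro h; simp only [id_eq] at h; rw [h] at hx; norm_num at hx
  exact (intervalIntegrable_iff_integrableOn_Ioo_of_le (by norm_num)).mp (h1.trans h2)

lemma image_eval {y z : ℝ} (hz : 0 < z) (hzy : z < y) :
    Ioo (0:ℝ) z = (fun v => y * z * (1 - v) / (y - v * z)) '' Ioo 0 1 := by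
  have hy : 0 < y := hz.trans hzy
  apply Subset.antisymm
  · intro u hu
    obtain ⟨hu0, huz⟩ := hu
    have hzu : 0 < z - u := by linarith
    have hyu : 0 < y - u := by linarith
    set w := y * (z - u) / (z * (y - u)) with hwdef
    have hw : w * (z * (y - u)) = y * (z - u) := div_mul_cancel₀ _ (by positivity)
    have hw1 : w * z < y := by
      rw [hwdef, div_mul_eq_mul_div, div_lt_iff₀ (by positivity)]
      nlinarith [mul_pos (mul_pos hy hz) (sub_pos.mpr hzy)]
    refine ⟨w, ⟨by positivity, ?_⟩, ?_⟩
    · rw [hwdef, div_lt_one (by positivity)]; nlinarith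
    · show y * z * (1 - w) / (y - w * z) = u
      rw [div_eq_iff (by linarith [hw1] : y - w * z ≠ 0)]
      linear_combination -hw
  · rintro u ⟨v, ⟨hv0, hv1⟩, rfl⟩
    have hD : 0 < y - v * z := by nlinarith
    have h1v : 0 < 1 - v := by linarith
    refine ⟨div_pos (by positivity) hD, ?_⟩
    rw [div_lt_iff₀ hD]
    nlinarith [mul_pos (mul_pos hv0 hz) (sub_pos.mpr hzy)]

lemma phi_deriv {y z : ℝ} (hz : 0 < z) (hzy : z < y) : ∀ v ∈ Ioo (0:ℝ) 1,
    HasDerivWithinAt (fun v => y * z * (1 - v) / (y - v * z))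
      (y * z * (z - y) / (y - v * z) ^ 2) (Ioo 0 1) v := by
  have hy : 0 < y := hz.trans hzy
  intro v hv
  have hD : 0 < y - v * z := by nlinarith [hv.1, hv.2]
  have h1 : HasDerivAt (fun v : ℝ => y * z * (1 - v)) (y * z * (0 - 1)) v :=
    ((hasDerivAt_const v (1:ℝ)).sub (hasDerivAt_id v)).const_mul _
  have h2 : HasDerivAt (fun v : ℝ => y - v * z) (0 - 1 * z) v :=
    (hasDerivAt_const v y).sub ((hasDerivAt_id v).mul_const z)
  have h3 := h1.div h2 hD.ne'
  refine HasDerivAt.hasDerivWithinAt (by convert h3 using 1; rfl; congr 1; ring)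

lemma phi_inj {y z : ℝ} (hz : 0 < z) (hzy : z < y) :
    InjOn (fun v => y * z * (1 - v) / (y - v * z)) (Ioo 0 1) := by
  have hy : 0 < y := hz.trans hzy
  have hyz : 0 < y - z := by linarith
  intro v1 h1 v2 h2 heq
  have hD1 : 0 < y - v1 * z := by nlinarith [h1.1, h1.2]
  have hD2 : 0 < y - v2 * z := by nlinarith [h2.1, h2.2]
  simp only [div_eq_div_iff hD1.ne' hD2.ne'] at heq
  have h4 : (v1 - v2) * (y * z * (y - z)) = 0 := by linear_combination -heq
  rcases mul_eq_zero.mp h4 with h | h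
  · linarith
  · nlinarith [mul_pos (mul_pos hy hz) hyz]

lemma phi_pt {a b y z : ℝ} (ha : a ∈ Ioo (1/2:ℝ) 1) (hb : b ∈ Ioo (1/2:ℝ) 1)
    (hz : 0 < z) (hzy : z < y) : EqOn
    (fun v => |y * z * (z - y) / (y - v * z) ^ 2| •
      ((y * z * (1 - v) / (y - v * z)) ^ (1-a-b) *
        ((y - y * z * (1 - v) / (y - v * z)) ^ (a-3/2) *
         (z - y * z * (1 - v) / (y - v * z)) ^ (b-3/2))))
    (fun v => (y ^ ((1:ℝ)/2-b) * z ^ ((1:ℝ)/2-a) * (y-z) ^ (a+b-2)) *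
      (v ^ (b - 1/2 - 1) * (1 - v) ^ (2 - a - b - 1))) (Ioo 0 1) := by
  obtain ⟨ha1, ha2⟩ := ha
  obtain ⟨hb1, hb2⟩ := hb
  have hy : 0 < y := hz.trans hzy
  have hyz : 0 < y - z := by linarith
  intro v hv
  obtain ⟨hv0, hv1⟩ := hv
  have h1v : 0 < 1 - v := by linarith
  have hD : 0 < y - v * z := by nlinarith
  have e1 : y - y * z * (1 - v) / (y - v * z) = y * (y - z) / (y - v * z) := by
    rw [eq_div_iff hD.ne', sub_mul, div_mul_cancel₀ _ hD.ne']; ring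
  have e2 : z - y * z * (1 - v) / (y - v * z) = z * v * (y - z) / (y - v * z) := by
    rw [eq_div_iff hD.ne', sub_mul, div_mul_cancel₀ _ hD.ne']; ring
  have habs : |y * z * (z - y) / (y - v * z) ^ 2| =
      y ^ (1:ℝ) * z ^ (1:ℝ) * (y - z) ^ (1:ℝ) / (y - v * z) ^ ((2:ℕ):ℝ) := by
    rw [abs_of_nonpos (div_nonpos_of_nonpos_of_nonneg
        (by nlinarith [mul_pos (mul_pos hy hz) hyz]) (by positivity)),
      Real.rpow_one, Real.rpow_one, Real.rpow_one, Real.rpow_natCast]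
    field_simp
    ring
  simp only [smul_eq_mul, habs, e1, e2]
  rw [Real.div_rpow (by positivity) hD.le, Real.div_rpow (by positivity) hD.le,
    Real.div_rpow (by positivity) hD.le,
    Real.mul_rpow (by positivity) h1v.le, Real.mul_rpow hy.le hz.le,
    Real.mul_rpow hy.le hyz.le,
    Real.mul_rpow (by positivity) hyz.le, Real.mul_rpow hz.le hv0.le]
  simp only [Real.rpow_def_of_pos hy, Real.rpow_def_of_pos hz,
    Real.rpow_def_of_pos hv0, Real.rpow_def_of_pos h1v,
    Real.rpow_def_of_pos hyz, Real.rpow_def_of_pos hD,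
    div_eq_mul_inv, ← Real.exp_neg, ← Real.exp_add]
  rw [Real.exp_eq_exp]
  push_cast
  ring

lemma inner_eval {a b y z : ℝ} (ha : a ∈ Ioo (1/2:ℝ) 1) (hb : b ∈ Ioo (1/2:ℝ) 1)
    (hz : 0 < z) (hzy : z < y) :
    ∫ u in Ioo (0:ℝ) z, u ^ (1-a-b) * ((y-u) ^ (a-3/2) * (z-u) ^ (b-3/2)) =
      Beta (b-1/2) (2-a-b) * (y ^ ((1:ℝ)/2-b) * z ^ ((1:ℝ)/2-a) * (y-z) ^ (a+b-2)) := by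
  rw [image_eval hz hzy,
    integral_image_eq_integral_abs_deriv_smul measurableSet_Ioo
      (phi_deriv hz hzy) (phi_inj hz hzy),
    setIntegral_congr_fun measurableSet_Ioo (phi_pt ha hb hz hzy),
    MeasureTheory.integral_const_mul, integral_beta (by linarith [ha.1, hb.1]) (by linarith [ha.2, hb.2])]
  ring

lemma inner_integrable {a b y z : ℝ} (ha : a ∈ Ioo (1/2:ℝ) 1) (hb : b ∈ Ioo (1/2:ℝ) 1)
    (hz : 0 < z) (hzy : z < y) :
    IntegrableOn (fun u => u ^ (1-a-b) * ((y-u) ^ (a-3/2) * (z-u) ^ (b-3/2)))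
      (Ioo (0:ℝ) z) := by
  rw [image_eval hz hzy,
    integrableOn_image_iff_integrableOn_abs_deriv_smul measurableSet_Ioo
      (phi_deriv hz hzy) (phi_inj hz hzy)]
  apply IntegrableOn.congr_fun _ (phi_pt ha hb hz hzy).symm measurableSet_Ioo
  exact (betaIntegrableOn (by linarith [ha.1, hb.1]) (by linarith [ha.2, hb.2])).const_mul _

lemma kernelIntegrableOn {c u T : ℝ} (hc : 1/2 < c) (hu : 0 < u) :
    IntegrableOn (fun x => (x - u) ^ (c - 3/2) * x ^ (c - 1/2)) (Ioo u T) := by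
  rcases le_or_gt u T with h | h
  · have h1 : IntervalIntegrable (fun x : ℝ => (x - u) ^ (c - 3/2)) volume u T := by
      have := (intervalIntegral.intervalIntegrable_rpow' (r := c - 3/2) (by linarith)
        (a := 0) (b := T - u)).comp_sub_right u
      rwa [zero_add, sub_add_cancel] at this
    have h2 : ContinuousOn (fun x : ℝ => x ^ (c - 1/2)) (uIcc u T) := by
      apply ContinuousOn.rpow_const continuousOn_id
      intro x hx
      rw [uIcc_of_le h] at hx
      exact Or.inl (hu.trans_le hx.1).ne'
    exact (intervalIntegrable_iff_integrableOn_Ioo_of_le h).mp (h1.mul_continuousOn h2)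
  · rw [Ioo_eq_empty (by linarith)]
    exact integrableOn_empty

lemma absIntervalIntegrable {r : ℝ} (hr : -1 < r) (y A B : ℝ) :
    IntervalIntegrable (fun z : ℝ => |y - z| ^ r) volume A B := by
  suffices H : ∀ C, IntervalIntegrable (fun z : ℝ => |y - z| ^ r) volume y C by
    exact (H A).symm.trans (H B)
  intro C
  rcases le_or_gt y C with h | h
  · rw [intervalIntegrable_iff_integrableOn_Ioo_of_le h]
    have h1 : IntegrableOn (fun z : ℝ => (z - y) ^ r) (Ioo y C) := by
      have := (intervalIntegral.intervalIntegrable_rpow' (r := r) hr (a := 0) (b := C - y)).comp_sub_right y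
      rw [zero_add, sub_add_cancel] at this
      exact (intervalIntegrable_iff_integrableOn_Ioo_of_le h).mp this
    apply h1.congr_fun _ measurableSet_Ioo
    intro x hx
    show (x - y) ^ r = |y - x| ^ r
    rw [abs_of_nonpos (by linarith [hx.1] : y - x ≤ 0), neg_sub]
  · apply IntervalIntegrable.symm
    rw [intervalIntegrable_iff_integrableOn_Ioo_of_le h.le]
    have h1 : IntegrableOn (fun z : ℝ => (y - z) ^ r) (Ioo C y) := by
      have := (intervalIntegral.intervalIntegrable_rpow' (r := r) hr
        (a := y - C) (b := 0)).comp_sub_left y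
      rw [sub_zero, sub_sub_cancel] at this
      exact (intervalIntegrable_iff_integrableOn_Ioo_of_le h.le).mp this
    apply h1.congr_fun _ measurableSet_Ioo
    intro x hx
    show (y - x) ^ r = |y - x| ^ r
    rw [abs_of_nonneg (by linarith [hx.2] : 0 ≤ y - x)]

open scoped ENNReal

lemma swap_aux {f : ℝ → ℝ → ℝ → ℝ≥0∞}
    (hf : Measurable fun p : ℝ × ℝ × ℝ => f p.1 p.2.1 p.2.2) :
    ∫⁻ u : ℝ, ∫⁻ y : ℝ, ∫⁻ z : ℝ, f u y z = ∫⁻ y : ℝ, ∫⁻ z : ℝ, ∫⁻ u : ℝ, f u y z := by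
  have h1 : (∫⁻ u : ℝ, ∫⁻ y : ℝ, ∫⁻ z : ℝ, f u y z)
      = ∫⁻ y : ℝ, ∫⁻ u : ℝ, ∫⁻ z : ℝ, f u y z := by
    apply lintegral_lintegral_swap
    apply Measurable.aemeasurable
    apply Measurable.lintegral_prod_right (f := fun (p : ℝ × ℝ) z => f p.1 p.2 z)
    exact hf.comp ((measurable_fst.comp measurable_fst).prodMk
      ((measurable_snd.comp measurable_fst).prodMk measurable_snd))
  rw [h1]
  refine lintegral_congr fun y => ?_
  apply lintegral_lintegral_swap
  apply Measurable.aemeasurable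
  exact hf.comp (measurable_fst.prodMk (measurable_const.prodMk measurable_snd))

lemma rhsIntegrableOn {a b s y : ℝ} (ha : a ∈ Ioo (1/2:ℝ) 1) (hb : b ∈ Ioo (1/2:ℝ) 1)
    (hy : 0 < y) :
    IntegrableOn (fun z => z ^ (b - a) * |y - z| ^ (a + b - 2)) (Ioo (0:ℝ) s) := by
  obtain ⟨ha1, ha2⟩ := ha
  obtain ⟨hb1, hb2⟩ := hb
  have hmeas : Measurable (fun z : ℝ => z ^ (b - a) * |y - z| ^ (a + b - 2)) := by fun_prop
  have h1 : IntegrableOn (fun z : ℝ => z ^ (b - a) * |y - z| ^ (a + b - 2))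
      (Ioc 0 (y/2)) := by
    have hg : IntegrableOn (fun z : ℝ => (y/2) ^ (a + b - 2) * z ^ (b - a))
        (Ioc 0 (y/2)) := by
      apply Integrable.const_mul
      exact (intervalIntegrable_iff_integrableOn_Ioc_of_le (by linarith)).mp
        (intervalIntegral.intervalIntegrable_rpow' (by linarith))
    apply Integrable.mono hg hmeas.aestronglyMeasurable.restrict
    filter_upwards [self_mem_ae_restrict measurableSet_Ioc] with z hz
    obtain ⟨hz0, hz2⟩ := hz
    have hyz : 0 < y - z := by linarith
    have key : |y - z| ^ (a + b - 2) ≤ (y/2) ^ (a + b - 2) := by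
      rw [abs_of_pos hyz]
      exact Real.rpow_le_rpow_of_nonpos (by positivity) (by linarith) (by linarith)
    rw [Real.norm_eq_abs, Real.norm_eq_abs,
      abs_of_nonneg (mul_nonneg (Real.rpow_nonneg hz0.le _) (Real.rpow_nonneg (abs_nonneg _) _)),
      abs_of_nonneg (mul_nonneg (Real.rpow_nonneg (by positivity) _) (Real.rpow_nonneg hz0.le _)),
      mul_comm ((y/2) ^ (a + b - 2))]
    exact mul_le_mul_of_nonneg_left key (Real.rpow_nonneg hz0.le _)
  have h2 : IntegrableOn (fun z : ℝ => z ^ (b - a) * |y - z| ^ (a + b - 2))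
      (Ioc (y/2) s) := by
    rcases le_or_gt (y/2) s with hcase | hcase
    · set M := max ((y/2) ^ (b - a)) (s ^ (b - a)) with hM
      have hg : IntegrableOn (fun z : ℝ => M * |y - z| ^ (a + b - 2)) (Ioc (y/2) s) := by
        apply Integrable.const_mul
        exact (intervalIntegrable_iff_integrableOn_Ioc_of_le hcase).mp
          (absIntervalIntegrable (by linarith) y _ _)
      apply Integrable.mono hg hmeas.aestronglyMeasurable.restrict
      filter_upwards [self_mem_ae_restrict measurableSet_Ioc] with z hz
      obtain ⟨hz1, hz2⟩ := hz
      have hz0 : 0 < z := lt_trans (by positivity) hz1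
      have key : z ^ (b - a) ≤ M := by
        rcases le_or_gt 0 (b - a) with he | he
        · exact le_trans (Real.rpow_le_rpow hz0.le hz2 he) (le_max_right _ _)
        · exact le_trans (Real.rpow_le_rpow_of_nonpos (by positivity) hz1.le he.le)
            (le_max_left _ _)
      have hMnn : 0 ≤ M := le_trans (Real.rpow_nonneg (by positivity) _) (le_max_left _ _)
      rw [Real.norm_eq_abs, Real.norm_eq_abs,
        abs_of_nonneg (mul_nonneg (Real.rpow_nonneg hz0.le _) (Real.rpow_nonneg (abs_nonneg _) _)),
        abs_of_nonneg (mul_nonneg hMnn (Real.rpow_nonneg (abs_nonneg _) _))]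
      exact mul_le_mul_of_nonneg_right key (Real.rpow_nonneg (abs_nonneg _) _)
    · rw [Ioc_eq_empty (by linarith)]
      exact integrableOn_empty
  apply (h1.union h2).mono_set
  intro z hz
  rcases le_or_gt z (y/2) with h | h
  · exact Or.inl ⟨hz.1, h⟩
  · exact Or.inr ⟨h, hz.2.le⟩

lemma ite_collapse (P Q R : Prop) [Decidable P] [Decidable Q] [Decidable R] (X : ℝ≥0∞) :
    (if P then (1:ℝ≥0∞) else 0) * ((if Q then (1:ℝ≥0∞) else 0) *
      ((if R then (1:ℝ≥0∞) else 0) * X)) = if P ∧ Q ∧ R then X else 0 := by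
  split_ifs <;> simp_all

lemma ite_expand (P : Prop) [Decidable P] (X : ℝ≥0∞) :
    (if P then X else 0) = (if P then (1:ℝ≥0∞) else 0) * X := by
  split_ifs <;> simp

lemma ite_ne_top' (P : Prop) [Decidable P] : (if P then (1:ℝ≥0∞) else 0) ≠ ∞ := by
  split_ifs <;> simp

lemma kernelFin {c T u : ℝ} (hc : 1/2 < c) (hu : 0 < u) :
    (∫⁻ x in Ioo u T, ENNReal.ofReal ((x-u) ^ (c-3/2) * x ^ (c-1/2))) ≠ ∞ := by
  have hint := kernelIntegrableOn (T := T) hc hu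
  have hnn : 0 ≤ᵐ[volume.restrict (Ioo u T)]
      fun x => (x-u) ^ (c-3/2) * x ^ (c-1/2) := by
    filter_upwards [self_mem_ae_restrict measurableSet_Ioo] with x hx
    exact mul_nonneg (Real.rpow_nonneg (by linarith [hx.1]) _)
      (Real.rpow_nonneg (by linarith [hx.1]) _)
  exact ((hasFiniteIntegral_iff_ofReal hnn).mp hint.2).ne

lemma core {a b s t : ℝ} (ha : a ∈ Ioo (1/2:ℝ) 1) (hb : b ∈ Ioo (1/2:ℝ) 1)
    (hs : 0 < s) (ht : 0 < t) :
    ∫⁻ u in Ioo (0:ℝ) (min s t), (ENNReal.ofReal (u ^ (1-a-b)) *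
        ((∫⁻ x in Ioo u t, ENNReal.ofReal ((x-u) ^ (a-3/2) * x ^ (a-1/2))) *
         (∫⁻ x in Ioo u s, ENNReal.ofReal ((x-u) ^ (b-3/2) * x ^ (b-1/2))))) =
    ∫⁻ y in Ioo (0:ℝ) t, ∫⁻ z in Ioo (0:ℝ) s, ENNReal.ofReal
      (((if z < y then Beta (b - 1/2) (2 - b - a) else 0)
          + (if y < z then Beta (a - 1/2) (2 - a - b) else 0))
        * (y / z) ^ (a - b) * |y - z| ^ (b + a - 2)) := by
  obtain ⟨ha1, ha2⟩ := ha
  obtain ⟨hb1, hb2⟩ := hb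
  set m := min s t with hm
  have hm0 : 0 < m := lt_min hs ht
  set Φ : ℝ → ℝ → ℝ → ℝ≥0∞ := fun u y z => ENNReal.ofReal (u ^ (1-a-b)) *
    (ENNReal.ofReal ((y-u) ^ (a-3/2) * y ^ (a-1/2)) *
     ENNReal.ofReal ((z-u) ^ (b-3/2) * z ^ (b-1/2))) with hΦ
  set f : ℝ → ℝ → ℝ → ℝ≥0∞ := fun u y z =>
    (if 0 < u ∧ u < m then (1:ℝ≥0∞) else 0) *
      ((if u < y ∧ y < t then (1:ℝ≥0∞) else 0) *
        ((if u < z ∧ z < s then (1:ℝ≥0∞) else 0) * Φ u y z)) with hf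
  have step1 : ∫⁻ u in Ioo (0:ℝ) m, (ENNReal.ofReal (u ^ (1-a-b)) *
        ((∫⁻ x in Ioo u t, ENNReal.ofReal ((x-u) ^ (a-3/2) * x ^ (a-1/2))) *
         (∫⁻ x in Ioo u s, ENNReal.ofReal ((x-u) ^ (b-3/2) * x ^ (b-1/2)))))
      = ∫⁻ u : ℝ, ∫⁻ y : ℝ, ∫⁻ z : ℝ, f u y z := by
    rw [← lintegral_indicator measurableSet_Ioo]
    refine lintegral_congr fun u => ?_
    rw [indicator_apply]
    by_cases hu : u ∈ Ioo (0:ℝ) m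
    · rw [if_pos hu]
      obtain ⟨hu0, hum⟩ := hu
      have hLB : (∫⁻ x in Ioo u s, ENNReal.ofReal ((x-u) ^ (b-3/2) * x ^ (b-1/2))) ≠ ∞ :=
        kernelFin hb1 hu0
      have hz1 : ∀ y : ℝ, (∫⁻ z : ℝ, f u y z)
          = (if u < y ∧ y < t then (1:ℝ≥0∞) else 0) *
            ((ENNReal.ofReal (u ^ (1-a-b)) *
              ENNReal.ofReal ((y-u) ^ (a-3/2) * y ^ (a-1/2))) *
             ∫⁻ x in Ioo u s, ENNReal.ofReal ((x-u) ^ (b-3/2) * x ^ (b-1/2))) := by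
        intro y
        have e1 : ∀ z : ℝ, f u y z = (if u < y ∧ y < t then (1:ℝ≥0∞) else 0) *
            ((if u < z ∧ z < s then (1:ℝ≥0∞) else 0) *
             ((ENNReal.ofReal (u ^ (1-a-b)) *
               ENNReal.ofReal ((y-u) ^ (a-3/2) * y ^ (a-1/2))) *
              ENNReal.ofReal ((z-u) ^ (b-3/2) * z ^ (b-1/2)))) := by
          intro z
          rw [hf]
          simp only [if_pos (⟨hu0, hum⟩ : 0 < u ∧ u < m), one_mul]
          rw [hΦ]
          ring
        simp only [e1]
        rw [lintegral_const_mul' _ _ (ite_ne_top' _)]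
        congr 1
        rw [← lintegral_const_mul' _ _
          (ENNReal.mul_ne_top ENNReal.ofReal_ne_top ENNReal.ofReal_ne_top),
          ← lintegral_indicator measurableSet_Ioo]
        refine lintegral_congr fun z => ?_
        rw [indicator_apply]
        simp only [Set.mem_Ioo]
        split_ifs with h
        · ring
        · simp
      simp only [hz1]
      symm
      calc ∫⁻ y : ℝ, (if u < y ∧ y < t then (1:ℝ≥0∞) else 0) *
            ((ENNReal.ofReal (u ^ (1-a-b)) *
              ENNReal.ofReal ((y-u) ^ (a-3/2) * y ^ (a-1/2))) *
             ∫⁻ x in Ioo u s, ENNReal.ofReal ((x-u) ^ (b-3/2) * x ^ (b-1/2)))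
          = ∫⁻ y : ℝ, (Ioo u t).indicator (fun y =>
              (ENNReal.ofReal (u ^ (1-a-b)) *
               ∫⁻ x in Ioo u s, ENNReal.ofReal ((x-u) ^ (b-3/2) * x ^ (b-1/2))) *
              ENNReal.ofReal ((y-u) ^ (a-3/2) * y ^ (a-1/2))) y := by
            refine lintegral_congr fun y => ?_
            rw [indicator_apply]
            simp only [Set.mem_Ioo]
            split_ifs with h
            · ring
            · simp
        _ = ∫⁻ y in Ioo u t,
              (ENNReal.ofReal (u ^ (1-a-b)) *
               ∫⁻ x in Ioo u s, ENNReal.ofReal ((x-u) ^ (b-3/2) * x ^ (b-1/2))) *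
              ENNReal.ofReal ((y-u) ^ (a-3/2) * y ^ (a-1/2)) :=
            lintegral_indicator measurableSet_Ioo _
        _ = (ENNReal.ofReal (u ^ (1-a-b)) *
               ∫⁻ x in Ioo u s, ENNReal.ofReal ((x-u) ^ (b-3/2) * x ^ (b-1/2))) *
              ∫⁻ x in Ioo u t, ENNReal.ofReal ((x-u) ^ (a-3/2) * x ^ (a-1/2)) :=
            lintegral_const_mul' _ _ (ENNReal.mul_ne_top ENNReal.ofReal_ne_top hLB)
        _ = ENNReal.ofReal (u ^ (1-a-b)) *
            ((∫⁻ x in Ioo u t, ENNReal.ofReal ((x-u) ^ (a-3/2) * x ^ (a-1/2))) *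
             ∫⁻ x in Ioo u s, ENNReal.ofReal ((x-u) ^ (b-3/2) * x ^ (b-1/2))) := by ring
    · rw [if_neg hu]
      have hu' : ¬ (0 < u ∧ u < m) := by rwa [← Set.mem_Ioo]
      symm
      simp only [hf, if_neg hu', zero_mul, lintegral_zero]
  rw [step1]
  have hΦmeas : Measurable fun p : ℝ × ℝ × ℝ => Φ p.1 p.2.1 p.2.2 := by
    rw [hΦ]; fun_prop
  have hfmeas : Measurable fun p : ℝ × ℝ × ℝ => f p.1 p.2.1 p.2.2 := by
    rw [hf]
    apply Measurable.mul
    · exact Measurable.ite ((measurableSet_lt measurable_const measurable_fst).inter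
        (measurableSet_lt measurable_fst measurable_const))
        measurable_const measurable_const
    apply Measurable.mul
    · exact Measurable.ite ((measurableSet_lt measurable_fst
        (measurable_fst.comp measurable_snd)).inter (measurableSet_lt
        (measurable_fst.comp measurable_snd) measurable_const))
        measurable_const measurable_const
    apply Measurable.mul
    · exact Measurable.ite ((measurableSet_lt measurable_fst
        (measurable_snd.comp measurable_snd)).inter (measurableSet_lt
        (measurable_snd.comp measurable_snd) measurable_const))
        measurable_const measurable_const
    exact hΦmeas
  rw [swap_aux hfmeas]
  have step4 : (∫⁻ y : ℝ, ∫⁻ z : ℝ, ∫⁻ u : ℝ, f u y z)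
      = ∫⁻ y in Ioo (0:ℝ) t, ∫⁻ z in Ioo (0:ℝ) s,
          ∫⁻ u in Ioo (0:ℝ) (min y z), Φ u y z := by
    rw [← lintegral_indicator measurableSet_Ioo]
    refine lintegral_congr fun y => ?_
    rw [indicator_apply]
    by_cases hy : y ∈ Ioo (0:ℝ) t
    · rw [if_pos hy]
      obtain ⟨hy0, hyt⟩ := hy
      rw [← lintegral_indicator measurableSet_Ioo]
      refine lintegral_congr fun z => ?_
      rw [indicator_apply]
      by_cases hz : z ∈ Ioo (0:ℝ) s
      · rw [if_pos hz]
        obtain ⟨hz0, hzs⟩ := hz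
        rw [← lintegral_indicator measurableSet_Ioo]
        refine lintegral_congr fun u => ?_
        rw [indicator_apply]
        rw [hf]
        simp only [Set.mem_Ioo, lt_min_iff]
        rw [ite_collapse]
        symm
        rw [show ∀ X : ℝ≥0∞, (if 0 < u ∧ u < y ∧ u < z then X else 0)
            = if (0 < u ∧ u < m) ∧ (u < y ∧ y < t) ∧ (u < z ∧ z < s) then X else 0 from
          fun X => if_congr ?_ rfl rfl]
        constructor
        · rintro ⟨hu0, huy, huz⟩
          exact ⟨⟨hu0, by rw [hm, lt_min_iff]; exact ⟨by linarith, by linarith⟩⟩,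
            ⟨huy, hyt⟩, ⟨huz, hzs⟩⟩
        · rintro ⟨⟨hu0, _⟩, ⟨huy, _⟩, ⟨huz, _⟩⟩
          exact ⟨hu0, huy, huz⟩
      · rw [if_neg hz]
        have hz' : ¬ (0 < z ∧ z < s) := by rwa [← Set.mem_Ioo]
        have : ∀ u : ℝ, f u y z = 0 := by
          intro u
          rw [hf]
          simp only []
          by_cases h2 : u < z ∧ z < s
          · by_cases h1 : 0 < u ∧ u < m
            · exact absurd ⟨lt_trans h1.1 h2.1, h2.2⟩ hz'
            · simp [h1]
          · simp [h2]
        simp only [this, lintegral_zero]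
    · rw [if_neg hy]
      have hy' : ¬ (0 < y ∧ y < t) := by rwa [← Set.mem_Ioo]
      have : ∀ u z : ℝ, f u y z = 0 := by
        intro u z
        rw [hf]
        simp only []
        by_cases h1 : 0 < u ∧ u < m
        · by_cases h2 : u < y ∧ y < t
          · exact absurd ⟨lt_trans h1.1 h2.1, h2.2⟩ hy'
          · simp [h2]
        · simp [h1]
      simp only [this, lintegral_zero]
  rw [step4]
  refine setLIntegral_congr_fun measurableSet_Ioo (fun y hy => ?_)
  obtain ⟨hy0, hyt⟩ := hy
  have hzne : ∀ᵐ z : ℝ, z ≠ y := by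
    rw [ae_iff]
    have : {z : ℝ | ¬ z ≠ y} = {y} := by ext w; simp
    rw [this]
    exact measure_singleton y
  refine lintegral_congr_ae ?_
  filter_upwards [self_mem_ae_restrict measurableSet_Ioo, ae_restrict_of_ae hzne]
    with z hz hne
  obtain ⟨hz0, hzs⟩ := hz
  have hcomb : ∀ w : ℝ, 0 < w → w < y → w < z → Φ w y z =
      ENNReal.ofReal (y ^ (a-1/2) * z ^ (b-1/2)) *
        ENNReal.ofReal (w ^ (1-a-b) * ((y-w) ^ (a-3/2) * (z-w) ^ (b-3/2))) := by
    intro w hw0 hwy hwz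
    have h1 : (0:ℝ) ≤ y - w := by linarith
    have h2 : (0:ℝ) ≤ z - w := by linarith
    rw [hΦ]
    simp only []
    rw [← ENNReal.ofReal_mul (mul_nonneg (Real.rpow_nonneg h1 _)
        (Real.rpow_nonneg hy0.le _)),
      ← ENNReal.ofReal_mul (Real.rpow_nonneg hw0.le _),
      ← ENNReal.ofReal_mul (by positivity : (0:ℝ) ≤ y ^ (a-1/2) * z ^ (b-1/2))]
    congr 1
    ring
  have hy2 : y ^ (a-1/2) * y ^ ((1:ℝ)/2-b) = y ^ (a-b) := by
    rw [← Real.rpow_add hy0]; congr 1; ring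
  have hz2 : z ^ (b-1/2) * z ^ ((1:ℝ)/2-a) = z ^ (b-a) := by
    rw [← Real.rpow_add hz0]; congr 1; ring
  have hz3 : z ^ (b-1/2) * z ^ ((1:ℝ)/2-a) = z ^ (-(a-b)) := by
    rw [← Real.rpow_add hz0]; congr 1; ring
  rcases lt_or_gt_of_ne hne with hzy | hyz
  · -- z < y
    rw [min_eq_right hzy.le,
      setLIntegral_congr_fun measurableSet_Ioo (fun w hw =>
        hcomb w hw.1 (lt_trans hw.2 hzy) hw.2),
      lintegral_const_mul' _ _ ENNReal.ofReal_ne_top]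
    have hnn : 0 ≤ᵐ[volume.restrict (Ioo (0:ℝ) z)]
        fun w => w ^ (1-a-b) * ((y-w) ^ (a-3/2) * (z-w) ^ (b-3/2)) := by
      filter_upwards [self_mem_ae_restrict measurableSet_Ioo] with w hw
      have h1 : (0:ℝ) ≤ y - w := by linarith [hw.2]
      have h2 : (0:ℝ) ≤ z - w := by linarith [hw.2]
      exact mul_nonneg (Real.rpow_nonneg hw.1.le _)
        (mul_nonneg (Real.rpow_nonneg h1 _) (Real.rpow_nonneg h2 _))
    rw [← ofReal_integral_eq_lintegral_ofReal
        (inner_integrable ⟨ha1, ha2⟩ ⟨hb1, hb2⟩ hz0 hzy) hnn,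
      inner_eval ⟨ha1, ha2⟩ ⟨hb1, hb2⟩ hz0 hzy,
      ← ENNReal.ofReal_mul (by positivity : (0:ℝ) ≤ y ^ (a-1/2) * z ^ (b-1/2))]
    congr 1
    rw [if_pos hzy, if_neg (by linarith : ¬ y < z), add_zero,
      abs_of_pos (by linarith : (0:ℝ) < y - z), Real.div_rpow hy0.le hz0.le,
      show (2:ℝ)-b-a = 2-a-b by ring, show b+a-(2:ℝ) = a+b-2 by ring,
      show y ^ (a-b) / z ^ (a-b) = y ^ (a-b) * z ^ (-(a-b)) from by
        rw [Real.rpow_neg hz0.le]; ring,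
      ← hy2, ← hz3]
    ring
  · -- y < z
    rw [min_eq_left hyz.le,
      setLIntegral_congr_fun measurableSet_Ioo (fun w hw =>
        hcomb w hw.1 hw.2 (lt_trans hw.2 hyz)),
      lintegral_const_mul' _ _ ENNReal.ofReal_ne_top]
    have hflip : (fun w => w ^ (1-a-b) * ((y-w) ^ (a-3/2) * (z-w) ^ (b-3/2)))
        = fun w => w ^ (1-b-a) * ((z-w) ^ (b-3/2) * (y-w) ^ (a-3/2)) := by
      funext w; rw [show (1:ℝ)-a-b = 1-b-a by ring]; ring
    have hint : IntegrableOn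
        (fun w => w ^ (1-a-b) * ((y-w) ^ (a-3/2) * (z-w) ^ (b-3/2))) (Ioo (0:ℝ) y) := by
      rw [hflip]; exact inner_integrable ⟨hb1, hb2⟩ ⟨ha1, ha2⟩ hy0 hyz
    have hnn : 0 ≤ᵐ[volume.restrict (Ioo (0:ℝ) y)]
        fun w => w ^ (1-a-b) * ((y-w) ^ (a-3/2) * (z-w) ^ (b-3/2)) := by
      filter_upwards [self_mem_ae_restrict measurableSet_Ioo] with w hw
      have h1 : (0:ℝ) ≤ y - w := by linarith [hw.2]
      have h2 : (0:ℝ) ≤ z - w := by linarith [hw.2]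
      exact mul_nonneg (Real.rpow_nonneg hw.1.le _)
        (mul_nonneg (Real.rpow_nonneg h1 _) (Real.rpow_nonneg h2 _))
    rw [← ofReal_integral_eq_lintegral_ofReal hint hnn]
    have heval2 : (∫ w in Ioo (0:ℝ) y,
        w ^ (1-a-b) * ((y-w) ^ (a-3/2) * (z-w) ^ (b-3/2)))
        = Beta (a-1/2) (2-b-a) *
          (z ^ ((1:ℝ)/2-a) * y ^ ((1:ℝ)/2-b) * (z-y) ^ (b+a-2)) := by
      rw [hflip]
      exact inner_eval ⟨hb1, hb2⟩ ⟨ha1, ha2⟩ hy0 hyz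
    rw [heval2,
      ← ENNReal.ofReal_mul (by positivity : (0:ℝ) ≤ y ^ (a-1/2) * z ^ (b-1/2))]
    congr 1
    rw [if_neg (by linarith : ¬ z < y), if_pos hyz, zero_add,
      abs_of_neg (by linarith : y - z < 0), neg_sub, Real.div_rpow hy0.le hz0.le,
      show (2:ℝ)-b-a = 2-a-b by ring,
      show y ^ (a-b) / z ^ (a-b) = y ^ (a-b) * z ^ (-(a-b)) from by
        rw [Real.rpow_neg hz0.le]; ring,
      ← hy2, ← hz3]
    ring

/-- form (iv) of the covariance function `R_H` (for `s, t > 0`). -/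
theorem RH_form_four (H : ℝ → ℝ) (hmeas : Measurable H)
    (hH : ∀ t, 0 ≤ t → H t ∈ Set.Ioo (1 / 2 : ℝ) 1)
    (s t : ℝ) (hs : 0 < s) (ht : 0 < t) :
    RH H t s = cH (H t) * cH (H s) *
      ∫ y in (0 : ℝ)..t, ∫ z in (0 : ℝ)..s,
        ((if z < y then Beta (H s - 1 / 2) (2 - H s - H t) else 0)
            + (if y < z then Beta (H t - 1 / 2) (2 - H t - H s) else 0))
          * (y / z) ^ (H t - H s) * |y - z| ^ (H s + H t - 2) := by
  obtain ⟨ha1, ha2⟩ := hH t ht.le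
  obtain ⟨hb1, hb2⟩ := hH s hs.le
  set a := H t with hadef
  set b := H s with hbdef
  set m := min s t with hm
  have hm0 : 0 < m := lt_min hs ht
  set W : ℝ → ℝ≥0∞ := fun u => ENNReal.ofReal (u ^ (1-a-b)) *
      ((∫⁻ x in Ioo u t, ENNReal.ofReal ((x-u) ^ (a-3/2) * x ^ (a-1/2))) *
       (∫⁻ x in Ioo u s, ENNReal.ofReal ((x-u) ^ (b-3/2) * x ^ (b-1/2)))) with hW
  have hKH : ∀ u ∈ Ioo (0:ℝ) m, KH H t u * KH H s u
      = (cH a * cH b) * (W u).toReal := by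
    intro u hu
    obtain ⟨hu0, hum⟩ := hu
    have hut : u ≤ t := le_of_lt (lt_of_lt_of_le hum (min_le_right s t))
    have hus : u ≤ s := le_of_lt (lt_of_lt_of_le hum (min_le_left s t))
    have conv : ∀ c : ℝ, 1/2 < c → ∀ T : ℝ, u ≤ T →
        (∫ x in u..T, (x-u) ^ (c-3/2) * x ^ (c-1/2))
          = (∫⁻ x in Ioo u T, ENNReal.ofReal ((x-u) ^ (c-3/2) * x ^ (c-1/2))).toReal := by
      intro c hc T hT
      rw [intervalIntegral.integral_of_le hT, MeasureTheory.integral_Ioc_eq_integral_Ioo,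
        integral_eq_lintegral_of_nonneg_ae]
      · filter_upwards [self_mem_ae_restrict measurableSet_Ioo] with x hx
        exact mul_nonneg (Real.rpow_nonneg (by linarith [hx.1]) _)
          (Real.rpow_nonneg (by linarith [hx.1]) _)
      · exact (by fun_prop :
          Measurable fun x : ℝ => (x-u) ^ (c-3/2) * x ^ (c-1/2)).aestronglyMeasurable
    have hmerge : u ^ ((1:ℝ)/2 - a) * u ^ ((1:ℝ)/2 - b) = u ^ (1-a-b) := by
      rw [← Real.rpow_add hu0]; congr 1; ring
    rw [KH, KH, if_pos hut, if_pos hus, conv a ha1 t hut, conv b hb1 s hus, hW]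
    simp only []
    rw [ENNReal.toReal_mul, ENNReal.toReal_mul,
      ENNReal.toReal_ofReal (Real.rpow_nonneg hu0.le _), ← hmerge]
    ring
  rw [RH, intervalIntegral.integral_of_le hm0.le,
    MeasureTheory.integral_Ioc_eq_integral_Ioo,
    setIntegral_congr_fun measurableSet_Ioo hKH, MeasureTheory.integral_const_mul]
  congr 1
  -- measurability of W
  have hLA : ∀ c : ℝ, ∀ T : ℝ, Measurable fun u : ℝ =>
      ∫⁻ x in Ioo u T, ENNReal.ofReal ((x-u) ^ (c-3/2) * x ^ (c-1/2)) := by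
    intro c T
    have e : ∀ u : ℝ, (∫⁻ x in Ioo u T, ENNReal.ofReal ((x-u) ^ (c-3/2) * x ^ (c-1/2)))
        = ∫⁻ x : ℝ, (if u < x ∧ x < T then (1:ℝ≥0∞) else 0) *
            ENNReal.ofReal ((x-u) ^ (c-3/2) * x ^ (c-1/2)) := by
      intro u
      rw [← lintegral_indicator measurableSet_Ioo]
      refine lintegral_congr fun x => ?_
      rw [indicator_apply, ite_expand]
      simp only [Set.mem_Ioo]
    simp only [e]
    apply Measurable.lintegral_prod_right (f := fun u x =>
      (if u < x ∧ x < T then (1:ℝ≥0∞) else 0) *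
        ENNReal.ofReal ((x-u) ^ (c-3/2) * x ^ (c-1/2)))
    apply Measurable.mul
    · exact Measurable.ite ((measurableSet_lt measurable_fst measurable_snd).inter
        (measurableSet_lt measurable_snd measurable_const))
        measurable_const measurable_const
    · fun_prop
  have hWmeas : Measurable W := by
    rw [hW]
    exact (by fun_prop : Measurable fun u : ℝ => ENNReal.ofReal (u ^ (1-a-b))).mul
      ((hLA a t).mul (hLA b s))
  have hWfin : ∀ᵐ u ∂(volume.restrict (Ioo (0:ℝ) m)), W u < ∞ := by
    filter_upwards [self_mem_ae_restrict measurableSet_Ioo] with u hu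
    rw [hW]
    simp only []
    rw [lt_top_iff_ne_top]
    exact ENNReal.mul_ne_top ENNReal.ofReal_ne_top
      (ENNReal.mul_ne_top (kernelFin ha1 hu.1) (kernelFin hb1 hu.1))
  rw [integral_toReal hWmeas.aemeasurable hWfin,
    core ⟨ha1, ha2⟩ ⟨hb1, hb2⟩ hs ht]
  -- now handle the RHS double integral
  rw [intervalIntegral.integral_of_le ht.le, MeasureTheory.integral_Ioc_eq_integral_Ioo]
  have hFmeas : Measurable fun p : ℝ × ℝ =>
      ((if p.2 < p.1 then Beta (b - 1/2) (2 - b - a) else 0)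
        + (if p.1 < p.2 then Beta (a - 1/2) (2 - a - b) else 0))
      * (p.1 / p.2) ^ (a - b) * |p.1 - p.2| ^ (b + a - 2) := by
    apply Measurable.mul
    apply Measurable.mul
    · exact (Measurable.ite (measurableSet_lt measurable_snd measurable_fst)
        measurable_const measurable_const).add
        (Measurable.ite (measurableSet_lt measurable_fst measurable_snd)
        measurable_const measurable_const)
    · fun_prop
    · fun_prop
  have hFnn : ∀ y z : ℝ, 0 ≤ y → 0 ≤ z → 0 ≤
      ((if z < y then Beta (b - 1/2) (2 - b - a) else 0)
        + (if y < z then Beta (a - 1/2) (2 - a - b) else 0))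
      * (y / z) ^ (a - b) * |y - z| ^ (b + a - 2) := by
    intro y z hy hz
    have h1 : 0 ≤ (if z < y then Beta (b - 1/2) (2 - b - a) else 0) := by
      split_ifs
      exacts [le_of_lt (Beta_pos (by linarith) (by linarith)), le_refl 0]
    have h2 : 0 ≤ (if y < z then Beta (a - 1/2) (2 - a - b) else 0) := by
      split_ifs
      exacts [le_of_lt (Beta_pos (by linarith) (by linarith)), le_refl 0]
    exact mul_nonneg (mul_nonneg (add_nonneg h1 h2)
      (Real.rpow_nonneg (div_nonneg hy hz) _)) (Real.rpow_nonneg (abs_nonneg _) _)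
  have hinner : ∀ y ∈ Ioo (0:ℝ) t, (∫ z in (0:ℝ)..s,
      ((if z < y then Beta (b - 1/2) (2 - b - a) else 0)
        + (if y < z then Beta (a - 1/2) (2 - a - b) else 0))
      * (y / z) ^ (a - b) * |y - z| ^ (b + a - 2))
      = (∫⁻ z in Ioo (0:ℝ) s, ENNReal.ofReal
          (((if z < y then Beta (b - 1/2) (2 - b - a) else 0)
            + (if y < z then Beta (a - 1/2) (2 - a - b) else 0))
          * (y / z) ^ (a - b) * |y - z| ^ (b + a - 2))).toReal := by
    intro y hy
    rw [intervalIntegral.integral_of_le hs.le, MeasureTheory.integral_Ioc_eq_integral_Ioo,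
      integral_eq_lintegral_of_nonneg_ae]
    · filter_upwards [self_mem_ae_restrict measurableSet_Ioo] with z hz
      exact hFnn y z hy.1.le hz.1.le
    · exact (hFmeas.comp (measurable_const.prodMk measurable_id)).aestronglyMeasurable
  rw [setIntegral_congr_fun measurableSet_Ioo hinner]
  have hLmeas : Measurable fun y : ℝ => ∫⁻ z in Ioo (0:ℝ) s, ENNReal.ofReal
      (((if z < y then Beta (b - 1/2) (2 - b - a) else 0)
        + (if y < z then Beta (a - 1/2) (2 - a - b) else 0))
      * (y / z) ^ (a - b) * |y - z| ^ (b + a - 2)) := by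
    apply Measurable.lintegral_prod_right (f := fun y z => ENNReal.ofReal
      (((if z < y then Beta (b - 1/2) (2 - b - a) else 0)
        + (if y < z then Beta (a - 1/2) (2 - a - b) else 0))
      * (y / z) ^ (a - b) * |y - z| ^ (b + a - 2)))
    exact hFmeas.ennreal_ofReal
  have hLfin : ∀ᵐ y ∂(volume.restrict (Ioo (0:ℝ) t)),
      (∫⁻ z in Ioo (0:ℝ) s, ENNReal.ofReal
        (((if z < y then Beta (b - 1/2) (2 - b - a) else 0)
          + (if y < z then Beta (a - 1/2) (2 - a - b) else 0))
        * (y / z) ^ (a - b) * |y - z| ^ (b + a - 2))) < ∞ := by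
    filter_upwards [self_mem_ae_restrict measurableSet_Ioo] with y hy
    obtain ⟨hy0, hyt⟩ := hy
    set Bm := max (Beta (b - 1/2) (2 - b - a)) (Beta (a - 1/2) (2 - a - b)) with hBm
    have hBm0 : 0 ≤ Bm :=
      le_trans (le_of_lt (Beta_pos (by linarith) (by linarith))) (le_max_left _ _)
    have hbound : ∀ z ∈ Ioo (0:ℝ) s,
        ((if z < y then Beta (b - 1/2) (2 - b - a) else 0)
          + (if y < z then Beta (a - 1/2) (2 - a - b) else 0))
        * (y / z) ^ (a - b) * |y - z| ^ (b + a - 2)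
        ≤ (Bm * y ^ (a-b)) * (z ^ (b-a) * |y - z| ^ (a+b-2)) := by
      intro z hz
      obtain ⟨hz0, hzs⟩ := hz
      have hdiv : (y / z) ^ (a-b) = y ^ (a-b) * z ^ (b-a) := by
        rw [Real.div_rpow hy0.le hz0.le, show b - a = -(a-b) by ring,
          Real.rpow_neg hz0.le]
        exact div_eq_mul_inv _ _
      have hcoef : ((if z < y then Beta (b - 1/2) (2 - b - a) else 0)
          + (if y < z then Beta (a - 1/2) (2 - a - b) else 0)) ≤ Bm := by
        rcases lt_trichotomy z y with h | h | h
        · rw [if_pos h, if_neg (by linarith), add_zero]; exact le_max_left _ _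
        · rw [if_neg (by linarith), if_neg (by linarith), add_zero]; exact hBm0
        · rw [if_neg (by linarith), if_pos h, zero_add]; exact le_max_right _ _
      rw [show (b+a-(2:ℝ)) = a+b-2 by ring, hdiv]
      calc ((if z < y then Beta (b - 1/2) (2 - b - a) else 0)
          + (if y < z then Beta (a - 1/2) (2 - a - b) else 0))
          * (y ^ (a-b) * z ^ (b-a)) * |y - z| ^ (a+b-2)
          ≤ Bm * (y ^ (a-b) * z ^ (b-a)) * |y - z| ^ (a+b-2) := by
            apply mul_le_mul_of_nonneg_right
              (mul_le_mul_of_nonneg_right hcoef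
                (mul_nonneg (Real.rpow_nonneg hy0.le _) (Real.rpow_nonneg hz0.le _)))
              (Real.rpow_nonneg (abs_nonneg _) _)
        _ = (Bm * y ^ (a-b)) * (z ^ (b-a) * |y - z| ^ (a+b-2)) := by ring
    have hint : Integrable
        (fun z => (Bm * y ^ (a-b)) * (z ^ (b-a) * |y - z| ^ (a+b-2)))
        (volume.restrict (Ioo (0:ℝ) s)) :=
      (rhsIntegrableOn ⟨ha1, ha2⟩ ⟨hb1, hb2⟩ hy0 (s := s)).const_mul _
    have hnn2 : 0 ≤ᵐ[volume.restrict (Ioo (0:ℝ) s)]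
        fun z => (Bm * y ^ (a-b)) * (z ^ (b-a) * |y - z| ^ (a+b-2)) := by
      filter_upwards [self_mem_ae_restrict measurableSet_Ioo] with z hz
      exact mul_nonneg (mul_nonneg hBm0 (Real.rpow_nonneg hy0.le _))
        (mul_nonneg (Real.rpow_nonneg hz.1.le _) (Real.rpow_nonneg (abs_nonneg _) _))
    calc (∫⁻ z in Ioo (0:ℝ) s, ENNReal.ofReal
          (((if z < y then Beta (b - 1/2) (2 - b - a) else 0)
            + (if y < z then Beta (a - 1/2) (2 - a - b) else 0))
          * (y / z) ^ (a - b) * |y - z| ^ (b + a - 2)))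
        ≤ ∫⁻ z in Ioo (0:ℝ) s, ENNReal.ofReal
            ((Bm * y ^ (a-b)) * (z ^ (b-a) * |y - z| ^ (a+b-2))) := by
          apply lintegral_mono_ae
          filter_upwards [self_mem_ae_restrict measurableSet_Ioo] with z hz
          exact ENNReal.ofReal_le_ofReal (hbound z hz)
      _ < ∞ := by
          rw [← ofReal_integral_eq_lintegral_ofReal hint hnn2]
          exact ENNReal.ofReal_lt_top
  rw [integral_toReal hLmeas.aemeasurable hLfin]
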